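/- Let A = ι(a₁)⋯ι(a_r) and B = ι(b₁)⋯ι(b_s) be invertible blades in Cl(Q) such that the span of {a₁,…,a_r} is contained in the span of {b₁,…,b_s} (so that A·B = A ⌟ B). Then for every vector x ∈ M, P_A(P_B(ι x)) = P_A(ι x), where P_C(X) = (1/2)·(X - α(C)·X·C⁻¹). -/

import Mathlib

open CliffordAlgebra QuadraticMap

section Helpers

variable {K M : Type*} [Field K] [Invertible (2 : K)]
    [AddCommGroup M] [Module K M] {Q : QuadraticForm K M}

/-- Composite reflection along a list of vectors. -/
noncomputable def reflList (Q : QuadraticForm K M) (l : List M) (x : M) : M :=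
  l.foldr (fun v y => y - ((Q v)⁻¹ * polar Q y v) • v) x

@[simp] lemma reflList_nil (x : M) : reflList Q [] x = x := rfl

lemma reflList_cons (v : M) (l : List M) (x : M) :
    reflList Q (v :: l) x =
      reflList Q l x - ((Q v)⁻¹ * polar Q (reflList Q l x) v) • v := rfl

lemma involute_ι_mul_ι (v x : M) (hv : Q v ≠ 0) :
    involute (ι Q v) * ι Q x = ι Q (x - ((Q v)⁻¹ * polar Q x v) • v) * ι Q v := by
  have h1 := ι_mul_ι_add_swap (Q := Q) v x
  have hc : ((Q v)⁻¹ * polar Q x v) • (ι Q v * ι Q v) =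
      algebraMap K (CliffordAlgebra Q) (polar Q x v) := by
    rw [ι_sq_scalar, Algebra.smul_def, ← map_mul]
    congr 1
    field_simp
  rw [involute_ι, _root_.map_sub, _root_.map_smul, sub_mul, smul_mul_assoc, hc,
    polar_comm, ← h1, neg_mul]
  abel

lemma involute_prod_mul_ι (l : List M) (hl : ∀ v ∈ l, Q v ≠ 0) (x : M) :
    involute ((l.map (ι Q)).prod) * ι Q x =
      ι Q (reflList Q l x) * (l.map (ι Q)).prod := by
  induction l with
  | nil => simp
  | cons v l ih =>
    simp only [List.map_cons, List.prod_cons, map_mul]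
    rw [mul_assoc, ih (fun w hw => hl w (.tail _ hw)), ← mul_assoc,
      involute_ι_mul_ι _ _ (hl v (.head _)), reflList_cons, mul_assoc]

lemma polar_reflList (l : List M) (v x : M) (h : ∀ w ∈ l, polar Q w v = 0) :
    polar Q (reflList Q l x) v = polar Q x v := by
  induction l with
  | nil => rfl
  | cons w l ih =>
    rw [reflList_cons, polar_sub_left, polar_smul_left, h w (.head _), smul_zero,
      sub_zero, ih (fun u hu => h u (.tail _ hu))]

lemma polar_add_reflList (l : List M) (x : M)
    (hperp : l.Pairwise fun u v => polar Q u v = 0) (hl : ∀ v ∈ l, Q v ≠ 0) :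
    ∀ v ∈ l, polar Q (x + reflList Q l x) v = 0 := by
  induction l with
  | nil => simp
  | cons w l ih =>
    obtain ⟨h1, h2⟩ := List.pairwise_cons.mp hperp
    intro v hv
    rw [reflList_cons, ← add_sub_assoc, polar_sub_left, polar_smul_left]
    rcases List.mem_cons.mp hv with rfl | hv
    · have hy : polar Q (reflList Q l x) v = polar Q x v :=
        polar_reflList l v x (fun u hu => polar_comm Q v u ▸ h1 u hu)
      rw [polar_add_left, hy, polar_self, nsmul_eq_mul, smul_eq_mul]
      have := hl v (.head _)
      field_simp
      ring
    · rw [h1 v hv, smul_zero, sub_zero,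
        ih h2 (fun u hu => hl u (.tail _ hu)) v hv]

lemma reflList_eq_self (l : List M) (x : M) (h : ∀ v ∈ l, polar Q x v = 0) :
    reflList Q l x = x := by
  induction l with
  | nil => rfl
  | cons w l ih =>
    rw [reflList_cons, ih (fun u hu => h u (.tail _ hu)), h w (.head _),
      mul_zero, zero_smul, sub_zero]

lemma reflList_add (l : List M) (x y : M) :
    reflList Q l (x + y) = reflList Q l x + reflList Q l y := by
  induction l with
  | nil => rfl
  | cons w l ih =>
    simp only [reflList_cons, ih, polar_add_left, mul_add, add_smul]
    abel

lemma conj_ι (l : List M) (hl : ∀ v ∈ l, Q v ≠ 0) (C : CliffordAlgebra Q)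
    [Invertible C] (hC : C = (l.map (ι Q)).prod) (z : M) :
    involute C * ι Q z * ⅟C = ι Q (reflList Q l z) := by
  have h := involute_prod_mul_ι l hl z
  rw [← hC] at h
  rw [h, mul_assoc, mul_invOf_self, mul_one]


end Helpers


/-- The inverse projection operator `P_A(X) = (1/2)·(X - α(A)·X·A⁻¹)` for invertible `A`. -/
noncomputable def invProj {K M : Type*} [Field K] [Invertible (2 : K)]
    [AddCommGroup M] [Module K M] {Q : QuadraticForm K M}
    (A : CliffordAlgebra Q) [Invertible A] (X : CliffordAlgebra Q) : CliffordAlgebra Q :=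
  ⅟(2 : K) • (X - involute A * X * ⅟A)

/-- If the span of the blade `A` is contained in that of the blade `B` (so `A·B = A ⌟ B`), then `P_A(P_B(x)) = P_A(x)` for every vector `x`. -/
theorem invProj_invProj_eq_left {K M : Type*} [Field K] [Invertible (2 : K)]
    [AddCommGroup M] [Module K M] {Q : QuadraticForm K M}
    {r s : ℕ} (a : Fin r → M) (b : Fin s → M)
    (A B : CliffordAlgebra Q) [Invertible A] [Invertible B]
    (hA : A = (List.ofFn fun i => ι Q (a i)).prod)
    (hB : B = (List.ofFn fun j => ι Q (b j)).prod)
    (ha : ∀ i j, i ≠ j → QuadraticMap.polar Q (a i) (a j) = 0)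
    (hb : ∀ i j, i ≠ j → QuadraticMap.polar Q (b i) (b j) = 0)
    (haQ : ∀ i, Q (a i) ≠ 0) (hbQ : ∀ j, Q (b j) ≠ 0)
    (hspan : Submodule.span K (Set.range a) ≤ Submodule.span K (Set.range b))
    (x : M) :
    invProj A (invProj B (ι Q x)) = invProj A (ι Q x) := by
  classical
  set la := List.ofFn a with hla
  set lb := List.ofFn b with hlb
  have hA' : A = (la.map (ι Q)).prod := by rw [hA, hla, List.map_ofFn]; rfl
  have hB' : B = (lb.map (ι Q)).prod := by rw [hB, hlb, List.map_ofFn]; rfl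
  have hQa : ∀ v ∈ la, Q v ≠ 0 := List.forall_mem_ofFn_iff.mpr haQ
  have hQb : ∀ v ∈ lb, Q v ≠ 0 := List.forall_mem_ofFn_iff.mpr hbQ
  have hpb : lb.Pairwise fun u v => polar Q u v = 0 :=
    List.pairwise_ofFn.mpr fun i j hij => hb i j (Fin.ne_of_lt hij)
  set u := reflList Q lb x with hu
  have horth : ∀ v ∈ la, polar Q (x + u) v = 0 := by
    have hker : Submodule.span K (Set.range b) ≤
        LinearMap.ker (Q.polarBilin (x + u)) := by
      rw [Submodule.span_le]
      rintro _ ⟨j, rfl⟩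
      simpa using polar_add_reflList lb x hpb hQb (b j)
        (List.mem_ofFn.mpr ⟨j, rfl⟩)
    intro v hv
    obtain ⟨i, rfl⟩ := List.mem_ofFn.mp hv
    have := hker (hspan (Submodule.subset_span ⟨i, rfl⟩))
    simpa using this
  have hfix : reflList Q la (x + u) = x + u := reflList_eq_self la _ horth
  have hiRu : ι Q (reflList Q la u) =
      ι Q x + ι Q u - ι Q (reflList Q la x) := by
    have h3 : ι Q (reflList Q la x) + ι Q (reflList Q la u) = ι Q x + ι Q u := by
      rw [← map_add, ← map_add, ← reflList_add, hfix]
    rw [← h3]; abel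
  have hfB : invProj B (ι Q x) = ⅟(2:K) • (ι Q x - ι Q u) := by
    rw [invProj, conj_ι lb hQb B hB' x]
  rw [hfB, invProj, invProj, mul_smul_comm, smul_mul_assoc, mul_sub, sub_mul,
    conj_ι la hQa A hA' x, conj_ι la hQa A hA' u, hiRu]
  have h2 : (2:K) ≠ 0 := Invertible.ne_zero 2
  rw [invOf_eq_inv (2:K)]
  match_scalars <;> field_simp <;> ring
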